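/- Let U_A ∈ ℝ^{m×p} and U_B ∈ ℝ^{m×q} have orthonormal columns, and let U_C ∈ ℝ^{m×ω} have orthonormal columns spanning a subspace containing both range(U_A) and range(U_B). Then for any matrix S ∈ ℝ^{r×m}, ‖U_A^T S^T S U_B − U_A^T U_B‖₂ ≤ ‖U_C^T S^T S U_C − I_ω‖₂. -/

import Mathlib

open Matrix

noncomputable def svals {p q : ℕ} (X : Matrix (Fin p) (Fin q) ℝ) : Fin q → ℝ :=
  fun i => Real.sqrt ((Matrix.isHermitian_conjTranspose_mul_self X).eigenvalues
    (Tuple.sort ((Matrix.isHermitian_conjTranspose_mul_self X).eigenvalues) i.rev))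

noncomputable def sNorm {p q : ℕ} (X : Matrix (Fin p) (Fin q) ℝ) : ℝ :=
  ⨆ i, svals X i

section Aux

lemma dp_self_nonneg {n : ℕ} (x : Fin n → ℝ) : 0 ≤ x ⬝ᵥ x :=
  Finset.sum_nonneg fun i _ => mul_self_nonneg _

lemma dp_mulVec_self {a b : ℕ} (M : Matrix (Fin a) (Fin b) ℝ) (x : Fin b → ℝ) :
    (M *ᵥ x) ⬝ᵥ (M *ᵥ x) = x ⬝ᵥ ((Mᵀ * M) *ᵥ x) := by
  rw [← mulVec_mulVec, dotProduct_mulVec x, vecMul_transpose, dotProduct_comm]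

lemma sqrt_eig_le_sNorm {p q : ℕ} (X : Matrix (Fin p) (Fin q) ℝ) (j : Fin q) :
    Real.sqrt ((Matrix.isHermitian_conjTranspose_mul_self X).eigenvalues j) ≤ sNorm X := by
  set e := (Matrix.isHermitian_conjTranspose_mul_self X).eigenvalues with he
  have : Real.sqrt (e j) = svals X (((Tuple.sort e).symm j).rev) := by
    simp [svals, he]
  rw [this]
  exact le_ciSup (Set.Finite.bddAbove (Set.finite_range _)) _

lemma sNorm_nonneg {p q : ℕ} (X : Matrix (Fin p) (Fin q) ℝ) : 0 ≤ sNorm X := by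
  rcases isEmpty_or_nonempty (Fin q) with h | h
  · simp [sNorm, Real.iSup_of_isEmpty]
  · exact le_trans (Real.sqrt_nonneg _) (sqrt_eig_le_sNorm X (Classical.arbitrary _))

lemma eig_le_sq {p q : ℕ} (X : Matrix (Fin p) (Fin q) ℝ) (j : Fin q) :
    (Matrix.isHermitian_conjTranspose_mul_self X).eigenvalues j ≤ sNorm X ^ 2 := by
  have h0 : 0 ≤ (Matrix.isHermitian_conjTranspose_mul_self X).eigenvalues j := by
    have hpsd : (Xᵀ * X).PosSemidef := by
      have := Matrix.posSemidef_conjTranspose_mul_self X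
      rwa [Matrix.conjTranspose_eq_transpose_of_trivial] at this
    exact hpsd.eigenvalues_nonneg j
  have := sqrt_eig_le_sNorm X j
  nlinarith [Real.sq_sqrt h0, Real.sqrt_nonneg ((Matrix.isHermitian_conjTranspose_mul_self X).eigenvalues j)]

/-- Rayleigh bound -/
lemma rayleigh {p q : ℕ} (X : Matrix (Fin p) (Fin q) ℝ) (w : Fin q → ℝ) :
    w ⬝ᵥ ((Xᵀ * X) *ᵥ w) ≤ sNorm X ^ 2 * (w ⬝ᵥ w) := by
  classical
  set hH := Matrix.isHermitian_conjTranspose_mul_self X with hhH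
  set U : Matrix (Fin q) (Fin q) ℝ := (hH.eigenvectorUnitary : Matrix (Fin q) (Fin q) ℝ) with hU
  set u : Fin q → ℝ := star U *ᵥ w with hu
  have hspec := hH.spectral_theorem
  have hdiag : Matrix.diagonal (RCLike.ofReal ∘ hH.eigenvalues) = Matrix.diagonal hH.eigenvalues := by
    ext i j; simp [Matrix.diagonal_apply]
  have key : w ⬝ᵥ ((Xᵀ * X) *ᵥ w) = u ⬝ᵥ (Matrix.diagonal hH.eigenvalues *ᵥ u) := by
    rw [← Matrix.conjTranspose_eq_transpose_of_trivial X]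
    conv_lhs => rw [hspec, hdiag, Unitary.conjStarAlgAut_apply]
    rw [← mulVec_mulVec, ← mulVec_mulVec, dotProduct_mulVec w]
    have h1 : w ᵥ* U = u := by
      rw [hu, Matrix.star_eq_conjTranspose, Matrix.conjTranspose_eq_transpose_of_trivial,
        mulVec_transpose]
    rw [h1, ← hu]
  have huu : u ⬝ᵥ u = w ⬝ᵥ w := by
    rw [hu, dp_mulVec_self]
    have : (star U)ᵀ * star U = 1 := by
      rw [Matrix.star_eq_conjTranspose, Matrix.conjTranspose_eq_transpose_of_trivial,
        Matrix.transpose_transpose, ← Matrix.conjTranspose_eq_transpose_of_trivial U,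
        ← Matrix.star_eq_conjTranspose]
      exact Unitary.coe_mul_star_self hH.eigenvectorUnitary
    rw [this, Matrix.one_mulVec]
  rw [key, ← huu]
  unfold dotProduct
  rw [Finset.mul_sum]
  apply Finset.sum_le_sum
  intro i _
  rw [mulVec_diagonal]
  have h1 : hH.eigenvalues i ≤ sNorm X ^ 2 := eig_le_sq X i
  nlinarith [mul_self_nonneg (u i)]

lemma mulVec_bound {p q : ℕ} (X : Matrix (Fin p) (Fin q) ℝ) (w : Fin q → ℝ) :
    (X *ᵥ w) ⬝ᵥ (X *ᵥ w) ≤ sNorm X ^ 2 * (w ⬝ᵥ w) := by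
  rw [dp_mulVec_self]; exact rayleigh X w

lemma contraction {a b : ℕ} (P : Matrix (Fin a) (Fin b) ℝ) (h : Pᵀ * P = 1) (w : Fin a → ℝ) :
    (Pᵀ *ᵥ w) ⬝ᵥ (Pᵀ *ᵥ w) ≤ w ⬝ᵥ w := by
  have h1 : (Pᵀ *ᵥ w) ⬝ᵥ (Pᵀ *ᵥ w) = w ⬝ᵥ ((P * Pᵀ) *ᵥ w) := by
    rw [dp_mulVec_self, Matrix.transpose_transpose]
  set E : Matrix (Fin a) (Fin a) ℝ := 1 - P * Pᵀ with hE
  have hEt : Eᵀ = E := by simp [hE, Matrix.transpose_sub, Matrix.transpose_mul]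
  have hEE : Eᵀ * E = E := by
    rw [hEt, hE]
    have : (P * Pᵀ) * (P * Pᵀ) = P * Pᵀ := by
      rw [Matrix.mul_assoc, ← Matrix.mul_assoc Pᵀ P, h, Matrix.one_mul]
    rw [Matrix.sub_mul, Matrix.mul_sub, Matrix.mul_sub, this]
    simp
  have h2 : 0 ≤ w ⬝ᵥ (E *ᵥ w) := by
    rw [← hEE, ← dp_mulVec_self]
    exact dp_self_nonneg _
  have h3 : w ⬝ᵥ (E *ᵥ w) = w ⬝ᵥ w - w ⬝ᵥ ((P * Pᵀ) *ᵥ w) := by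
    rw [hE, Matrix.sub_mulVec, dotProduct_sub, Matrix.one_mulVec]
  rw [h1]; linarith [h2, h3.symm]

lemma sNorm_le_of_bound {p q : ℕ} (Y : Matrix (Fin p) (Fin q) ℝ) (c : ℝ) (hc : 0 ≤ c)
    (hb : ∀ v : Fin q → ℝ, (Y *ᵥ v) ⬝ᵥ (Y *ᵥ v) ≤ c ^ 2 * (v ⬝ᵥ v)) :
    sNorm Y ≤ c := by
  apply Real.iSup_le _ hc
  intro i
  set hH := Matrix.isHermitian_conjTranspose_mul_self Y with hhH
  show Real.sqrt (hH.eigenvalues (Tuple.sort hH.eigenvalues i.rev)) ≤ c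
  set j := Tuple.sort hH.eigenvalues i.rev
  set v : Fin q → ℝ := ⇑(hH.eigenvectorBasis j) with hv
  have hvv : v ⬝ᵥ v = 1 := by
    have hnorm : ‖hH.eigenvectorBasis j‖ = 1 := hH.eigenvectorBasis.orthonormal.1 j
    have : (inner ℝ (hH.eigenvectorBasis j) (hH.eigenvectorBasis j) : ℝ) = 1 := by
      rw [real_inner_self_eq_norm_sq, hnorm]; norm_num
    rw [← this, PiLp.inner_apply]
    simp [dotProduct, hv, sq]
  have heig : (Yᵀ * Y) *ᵥ v = hH.eigenvalues j • v := hH.mulVec_eigenvectorBasis j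
  have h1 : hH.eigenvalues j = (Y *ᵥ v) ⬝ᵥ (Y *ᵥ v) := by
    rw [dp_mulVec_self, heig, dotProduct_smul, hvv]
    simp
  have h2 : hH.eigenvalues j ≤ c ^ 2 := by
    rw [h1]
    calc (Y *ᵥ v) ⬝ᵥ (Y *ᵥ v) ≤ c ^ 2 * (v ⬝ᵥ v) := hb v
    _ = c ^ 2 := by rw [hvv]; ring
  calc Real.sqrt (hH.eigenvalues j) ≤ Real.sqrt (c ^ 2) := Real.sqrt_le_sqrt h2
  _ = c := by rw [Real.sqrt_sq hc]

end Aux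

theorem stmt7 {m p q ω r : ℕ}
    (UA : Matrix (Fin m) (Fin p) ℝ) (UB : Matrix (Fin m) (Fin q) ℝ)
    (UC : Matrix (Fin m) (Fin ω) ℝ) (S : Matrix (Fin r) (Fin m) ℝ)
    (hUA : UAᵀ * UA = 1) (hUB : UBᵀ * UB = 1) (hUC : UCᵀ * UC = 1)
    (hAC : LinearMap.range UA.mulVecLin ≤ LinearMap.range UC.mulVecLin)
    (hBC : LinearMap.range UB.mulVecLin ≤ LinearMap.range UC.mulVecLin) :
    sNorm (UAᵀ * Sᵀ * S * UB - UAᵀ * UB) ≤ sNorm (UCᵀ * Sᵀ * S * UC - 1) := by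
  classical
  have hfactor : ∀ {k : ℕ} (A : Matrix (Fin m) (Fin k) ℝ),
      LinearMap.range A.mulVecLin ≤ LinearMap.range UC.mulVecLin → UC * (UCᵀ * A) = A := by
    intro k A hr
    have hv : ∀ x : Fin k → ℝ, (UC * (UCᵀ * A)) *ᵥ x = A *ᵥ x := by
      intro x
      obtain ⟨y, hy⟩ := hr (LinearMap.mem_range_self A.mulVecLin x)
      have hy' : UC *ᵥ y = A *ᵥ x := by simpa using hy
      have t1 : (UCᵀ * A) *ᵥ x = UCᵀ *ᵥ (A *ᵥ x) := by rw [mulVec_mulVec]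
      have t2 : UCᵀ *ᵥ (UC *ᵥ y) = y := by rw [mulVec_mulVec, hUC, one_mulVec]
      calc (UC * (UCᵀ * A)) *ᵥ x = UC *ᵥ ((UCᵀ * A) *ᵥ x) := by rw [mulVec_mulVec]
      _ = UC *ᵥ y := by rw [t1, ← hy', t2]
      _ = A *ᵥ x := hy'
    ext i j
    have := congrFun (hv (Pi.single j 1)) i
    simpa [mulVec_single] using this
  have hA : UC * (UCᵀ * UA) = UA := hfactor UA hAC
  have hB : UC * (UCᵀ * UB) = UB := hfactor UB hBC
  have e1 : (UCᵀ * UA)ᵀ * UCᵀ = UAᵀ := by rw [← Matrix.transpose_mul, hA]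
  have hPP : (UCᵀ * UA)ᵀ * (UCᵀ * UA) = 1 := by
    have h := hUA
    conv_lhs at h => rw [← hA]
    rw [Matrix.transpose_mul] at h
    rwa [Matrix.mul_assoc, ← Matrix.mul_assoc UCᵀ UC, hUC, Matrix.one_mul] at h
  have hQQ : (UCᵀ * UB)ᵀ * (UCᵀ * UB) = 1 := by
    have h := hUB
    conv_lhs at h => rw [← hB]
    rw [Matrix.transpose_mul] at h
    rwa [Matrix.mul_assoc, ← Matrix.mul_assoc UCᵀ UC, hUC, Matrix.one_mul] at h
  have e2 : (UCᵀ * UA)ᵀ * (UCᵀ * UB) = UAᵀ * UB := by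
    rw [← Matrix.mul_assoc, e1]
  have hY : UAᵀ * Sᵀ * S * UB - UAᵀ * UB
      = (UCᵀ * UA)ᵀ * (UCᵀ * Sᵀ * S * UC - 1) * (UCᵀ * UB) := by
    rw [Matrix.mul_sub, Matrix.mul_one, Matrix.sub_mul, e2]
    congr 1
    simp only [Matrix.mul_assoc]
    rw [← Matrix.mul_assoc (UCᵀ * UA)ᵀ UCᵀ, e1]
    rw [hB]
  rw [hY]
  apply sNorm_le_of_bound _ _ (sNorm_nonneg _)
  intro v
  have hmv : ((UCᵀ * UA)ᵀ * (UCᵀ * Sᵀ * S * UC - 1) * (UCᵀ * UB)) *ᵥ v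
      = (UCᵀ * UA)ᵀ *ᵥ ((UCᵀ * Sᵀ * S * UC - 1) *ᵥ ((UCᵀ * UB) *ᵥ v)) := by
    rw [mulVec_mulVec, mulVec_mulVec]
  rw [hmv]
  set N : Matrix (Fin ω) (Fin ω) ℝ := UCᵀ * Sᵀ * S * UC - 1 with hN
  set w : Fin ω → ℝ := (UCᵀ * UB) *ᵥ v with hw
  calc ((UCᵀ * UA)ᵀ *ᵥ (N *ᵥ w)) ⬝ᵥ ((UCᵀ * UA)ᵀ *ᵥ (N *ᵥ w))
      ≤ (N *ᵥ w) ⬝ᵥ (N *ᵥ w) := contraction (UCᵀ * UA) hPP _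
  _ ≤ sNorm N ^ 2 * (w ⬝ᵥ w) := mulVec_bound N _
  _ = sNorm N ^ 2 * (v ⬝ᵥ v) := by rw [hw, dp_mulVec_self, hQQ, one_mulVec]
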